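/- Let F be a field and A, B finite nonempty subsets of F with |B| ≥ 2. With R(A,B) and E⁺(A, rB) as above, suppose |R(A,B)| ≥ |B|². Then there exists r ∈ R(A,B) with E⁺(A, rB) ≤ 2(|A||B| + |A|²), and consequently |A + rB| ≥ (|A||B|)²/(2(|A||B| + |A|²)); in particular either |A + rB| ≥ |A||B|/4 or |A + rB| ≥ |B|²/4. -/

import Mathlib

open Finset Pointwise

/-- The ratio set `R(A,B)` as a finset. -/
def ratioSet {F : Type*} [Field F] [DecidableEq F] (A B : Finset F) : Finset F :=
  ((A ×ˢ A) ×ˢ ((B ×ˢ B).filter (fun b => b.1 ≠ b.2))).image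
    (fun x => (x.1.1 - x.1.2) / (x.2.1 - x.2.2))

/-- The additive energy `E⁺(A, rB)`. -/
def addEnergy {F : Type*} [Field F] [DecidableEq F] (A B : Finset F) (r : F) : ℕ :=
  ((A ×ˢ A ×ˢ B ×ˢ B).filter
    (fun x => x.1 + r * x.2.2.1 = x.2.1 + r * x.2.2.2)).card

section Aux
variable {F : Type*} [Field F] [DecidableEq F] (A B : Finset F)

lemma cs_lemma (hB : B.Nonempty) (r : F) :
    A.card ^ 2 * B.card ^ 2 ≤ (A + r • B).card * addEnergy A B r := by
  rcases eq_or_ne r 0 with rfl | hr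
  · rw [zero_smul_finset hB]
    have h1 : A + (0 : Finset F) = A := by simp
    rw [h1]
    have h2 : addEnergy A B 0 = A.card * (B.card * B.card) := by
      unfold _root_.addEnergy
      rw [← card_product, ← card_product]
      apply Finset.card_bij (fun x _ => (x.1, x.2.2.1, x.2.2.2))
      · rintro ⟨a₁, a₂, b₁, b₂⟩ hx
        simp only [mem_filter, mem_product] at hx ⊢
        exact ⟨hx.1.1, hx.1.2.2.1, hx.1.2.2.2⟩
      · rintro ⟨a₁, a₂, b₁, b₂⟩ hx ⟨a₁', a₂', b₁', b₂'⟩ hy h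
        simp only [mem_filter, mem_product, mul_zero, zero_mul, add_zero] at hx hy
        simp only [Prod.mk.injEq] at h ⊢
        obtain ⟨h1, h2, h3⟩ := h
        refine ⟨h1, ?_, h2, h3⟩
        rw [← hx.2, ← hy.2, h1]
      · rintro ⟨a, b₁, b₂⟩ hx
        simp only [mem_product] at hx
        exact ⟨(a, a, b₁, b₂), by simp [mem_filter, mem_product, hx.1, hx.2.1, hx.2.2], rfl⟩
    rw [h2]; ring_nf; nlinarith [Nat.zero_le A.card]
  · have hE : addEnergy A B r = Finset.addEnergy A (r • B) := by
      unfold _root_.addEnergy Finset.addEnergy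
      apply Finset.card_bij (fun x _ => ((x.1, x.2.1), (r * x.2.2.1, r * x.2.2.2)))
      · rintro ⟨a₁, a₂, b₁, b₂⟩ hx
        simp only [mem_filter, mem_product] at hx ⊢
        obtain ⟨⟨h1, h2, h3, h4⟩, h5⟩ := hx
        exact ⟨⟨⟨h1, h2⟩, smul_mem_smul_finset h3, smul_mem_smul_finset h4⟩, h5⟩
      · rintro ⟨a₁, a₂, b₁, b₂⟩ hx ⟨a₁', a₂', b₁', b₂'⟩ hy h
        simp only [Prod.mk.injEq] at h ⊢
        obtain ⟨⟨h1, h2⟩, h3, h4⟩ := h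
        exact ⟨h1, h2, mul_left_cancel₀ hr h3, mul_left_cancel₀ hr h4⟩
      · rintro ⟨⟨a₁, a₂⟩, c₁, c₂⟩ hx
        simp only [mem_filter, mem_product] at hx
        obtain ⟨⟨⟨h1, h2⟩, h3, h4⟩, h5⟩ := hx
        obtain ⟨b₁, hb₁, rfl⟩ := mem_smul_finset.mp h3
        obtain ⟨b₂, hb₂, rfl⟩ := mem_smul_finset.mp h4
        refine ⟨(a₁, a₂, b₁, b₂), ?_, rfl⟩
        simp only [mem_filter, mem_product]
        exact ⟨⟨h1, h2, hb₁, hb₂⟩, by simpa using h5⟩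
    have hcard : (r • B).card = B.card := by
      rw [smul_finset_def]
      exact card_image_of_injective _ (MulAction.injective₀ hr)
    calc A.card ^ 2 * B.card ^ 2 = A.card ^ 2 * (r • B).card ^ 2 := by rw [hcard]
      _ ≤ (A + r • B).card * Finset.addEnergy A (r • B) :=
          Finset.le_card_add_mul_addEnergy A (r • B)
      _ = (A + r • B).card * addEnergy A B r := by rw [hE]

lemma energy_sum (R : Finset F) :
    ∑ r ∈ R, addEnergy A B r ≤ R.card * (A.card * B.card) + A.card ^ 2 * B.card ^ 2 := by
  classical
  set T : F → Finset (F × F × F × F) := fun r =>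
    (A ×ˢ A ×ˢ B ×ˢ B).filter
      (fun x => x.1 + r * x.2.2.1 = x.2.1 + r * x.2.2.2 ∧ x.2.2.1 ≠ x.2.2.2) with hT
  have hsplit : ∀ r : F, addEnergy A B r ≤ A.card * B.card + (T r).card := by
    intro r
    have hkey := card_filter_add_card_filter_not (s := (A ×ˢ A ×ˢ B ×ˢ B).filter
      (fun x => x.1 + r * x.2.2.1 = x.2.1 + r * x.2.2.2))
      (p := fun x => x.2.2.1 = x.2.2.2)
    have hdiag : (((A ×ˢ A ×ˢ B ×ˢ B).filter
        (fun x => x.1 + r * x.2.2.1 = x.2.1 + r * x.2.2.2)).filter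
        (fun x => x.2.2.1 = x.2.2.2)).card ≤ A.card * B.card := by
      rw [← card_product]
      apply Finset.card_le_card_of_injOn (fun x => (x.1, x.2.2.1))
      · rintro ⟨a₁, a₂, b₁, b₂⟩ hx
        simp only [mem_coe, mem_filter, mem_product] at hx
        exact mem_product.mpr ⟨hx.1.1.1, hx.1.1.2.2.1⟩
      · rintro ⟨a₁, a₂, b₁, b₂⟩ hx ⟨a₁', a₂', b₁', b₂'⟩ hy h
        simp only [coe_filter, Set.mem_setOf_eq, mem_filter] at hx hy
        simp only [Prod.mk.injEq] at h ⊢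
        obtain ⟨rfl, rfl⟩ := h
        obtain ⟨hx1, hx2⟩ := hx
        obtain ⟨hy1, hy2⟩ := hy
        have u1 : a₁ = a₂ := by
          have := hx1.2; rw [hx2] at this; exact add_right_cancel this
        have u2 : a₁ = a₂' := by
          have := hy1.2; rw [hy2] at this; exact add_right_cancel this
        exact ⟨rfl, u1.symm.trans u2, rfl, hx2.symm.trans hy2⟩
    have hoff : (((A ×ˢ A ×ˢ B ×ˢ B).filter
        (fun x => x.1 + r * x.2.2.1 = x.2.1 + r * x.2.2.2)).filter
        (fun x => ¬ x.2.2.1 = x.2.2.2)).card ≤ (T r).card := by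
      apply card_le_card
      intro x hx
      simp only [mem_filter, hT] at hx ⊢
      exact ⟨hx.1.1, hx.1.2, hx.2⟩
    calc addEnergy A B r
        = _ + _ := hkey.symm
      _ ≤ A.card * B.card + (T r).card := add_le_add hdiag hoff
  have hdisj : (↑R : Set F).PairwiseDisjoint T := by
    rintro r - s - hrs
    simp only [Function.onFun, disjoint_left]
    rintro ⟨a₁, a₂, b₁, b₂⟩ hx hy
    simp only [hT, mem_filter] at hx hy
    obtain ⟨-, e1, hne⟩ := hx
    obtain ⟨-, e2, -⟩ := hy
    apply hrs
    have hb : b₁ - b₂ ≠ 0 := sub_ne_zero.mpr hne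
    have h0 : (r - s) * (b₁ - b₂) = 0 := by linear_combination e1 - e2
    rcases mul_eq_zero.mp h0 with h | h
    · exact sub_eq_zero.mp h
    · exact absurd h hb
  have hsumT : ∑ r ∈ R, (T r).card ≤ A.card ^ 2 * B.card ^ 2 := by
    rw [← Finset.card_biUnion hdisj]
    calc (R.biUnion T).card ≤ (A ×ˢ A ×ˢ B ×ˢ B).card := by
          apply card_le_card
          exact biUnion_subset.mpr fun r _ => filter_subset _ _
      _ = A.card ^ 2 * B.card ^ 2 := by simp [card_product]; ring
  calc ∑ r ∈ R, addEnergy A B r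
      ≤ ∑ r ∈ R, (A.card * B.card + (T r).card) := sum_le_sum fun r _ => hsplit r
    _ = R.card * (A.card * B.card) + ∑ r ∈ R, (T r).card := by
        rw [sum_add_distrib, sum_const, smul_eq_mul]
    _ ≤ R.card * (A.card * B.card) + A.card ^ 2 * B.card ^ 2 := by
        exact Nat.add_le_add_left hsumT _

end Aux

theorem stmt_7 (F : Type*) [Field F] [DecidableEq F] (A B : Finset F)
    (hA : A.Nonempty) (hB : 2 ≤ B.card)
    (hR : B.card ^ 2 ≤ (ratioSet A B).card) :
    ∃ r ∈ ratioSet A B,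
      addEnergy A B r ≤ 2 * (A.card * B.card + A.card ^ 2) ∧
      ((A + r • B).card : ℝ) ≥
        ((A.card : ℝ) * B.card) ^ 2 / (2 * ((A.card : ℝ) * B.card + (A.card : ℝ) ^ 2)) ∧
      (((A + r • B).card : ℝ) ≥ (A.card : ℝ) * B.card / 4 ∨
        ((A + r • B).card : ℝ) ≥ (B.card : ℝ) ^ 2 / 4) := by
  classical
  set R := ratioSet A B with hRdef
  have hBne : B.Nonempty := Finset.card_pos.mp (by omega)
  have hRpos : 0 < R.card := by
    have : 0 < B.card ^ 2 := by positivity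
    omega
  have hRne : R.Nonempty := Finset.card_pos.mp hRpos
  obtain ⟨r, hrR, hmin⟩ := R.exists_min_image (addEnergy A B) hRne
  refine ⟨r, hrR, ?_⟩
  -- energy bound
  have hEbound : addEnergy A B r ≤ A.card * B.card + A.card ^ 2 := by
    have h1 : R.card * addEnergy A B r ≤ ∑ r' ∈ R, addEnergy A B r' := by
      have := Finset.card_nsmul_le_sum R _ _ hmin
      simpa [smul_eq_mul] using this
    have h2 := energy_sum A B R
    have h3 : A.card ^ 2 * B.card ^ 2 ≤ A.card ^ 2 * R.card :=
      Nat.mul_le_mul_left _ hR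
    have h4 : R.card * addEnergy A B r ≤ R.card * (A.card * B.card + A.card ^ 2) := by
      calc R.card * addEnergy A B r ≤ R.card * (A.card * B.card) + A.card ^ 2 * B.card ^ 2 :=
            le_trans h1 h2
        _ ≤ R.card * (A.card * B.card) + A.card ^ 2 * R.card := Nat.add_le_add_left h3 _
        _ = R.card * (A.card * B.card + A.card ^ 2) := by ring
    exact Nat.le_of_mul_le_mul_left h4 hRpos
  have hE2 : addEnergy A B r ≤ 2 * (A.card * B.card + A.card ^ 2) := by omega
  refine ⟨hE2, ?_⟩
  -- Cauchy-Schwarz consequence in ℕ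
  have hcs := cs_lemma A B hBne r
  have hnat : A.card ^ 2 * B.card ^ 2 ≤ (A + r • B).card * (2 * (A.card * B.card + A.card ^ 2)) :=
    le_trans hcs (Nat.mul_le_mul_left _ hE2)
  -- pass to ℝ
  have ha1 : (1 : ℝ) ≤ (A.card : ℝ) := by exact_mod_cast hA.card_pos
  have hb2 : (2 : ℝ) ≤ (B.card : ℝ) := by exact_mod_cast hB
  have hden : (0 : ℝ) < 2 * ((A.card : ℝ) * B.card + (A.card : ℝ) ^ 2) := by nlinarith
  have hnatR : ((A.card : ℝ) * B.card) ^ 2 ≤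
      ((A + r • B).card : ℝ) * (2 * ((A.card : ℝ) * B.card + (A.card : ℝ) ^ 2)) := by
    have h := (Nat.cast_le (α := ℝ)).mpr hnat
    push_cast at h
    nlinarith [h]
  have hmain : ((A + r • B).card : ℝ) ≥
      ((A.card : ℝ) * B.card) ^ 2 / (2 * ((A.card : ℝ) * B.card + (A.card : ℝ) ^ 2)) :=
    (div_le_iff₀ hden).mpr hnatR
  refine ⟨hmain, ?_⟩
  rcases le_total A.card B.card with hab | hba
  · left
    refine le_trans ?_ hmain
    rw [div_le_div_iff₀ (by norm_num) hden]
    have : (A.card : ℝ) ≤ B.card := by exact_mod_cast hab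
    nlinarith
  · right
    refine le_trans ?_ hmain
    rw [div_le_div_iff₀ (by norm_num) hden]
    have : (B.card : ℝ) ≤ A.card := by exact_mod_cast hba
    nlinarith
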